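/- arXiv:2303.15845 — 2 statements merged into one kernel-verified Lean document; each statement's English description precedes it below -/
import Mathlib

section
/- Let n ≥ 1, let P_Y be a probability measure on ℝ^n with differentiable density p_Y satisfying ‖∇p_Y(y)‖ ≤ K for all y and some K > 0, and let ỹ ∈ ℝ^n with p_Y(ỹ) = a > 0. Let (μ_y)_{y∈ℝ^n} be a family of probability measures on ℝ^m with finite first moments (the posteriors), and set k = a/(2K) + ‖ỹ‖. Assume: (i) there is C_k < ∞ with W₁(μ_{y₁}, μ_{y₂}) ≤ C_k‖y₁ − y₂‖ for all ‖y₁‖, ‖y₂‖ ≤ k; (ii) P_Z is a probability measure on ℝ^d and G : ℝ^n × ℝ^d → ℝ^m is such that every pushforward G(y,·)_#P_Z has finite first moment, y ↦ G(y,z) is differentiable with ‖∇_y G(y,z)‖ ≤ L_k for all z ∈ supp(P_Z) and all ‖y‖ ≤ k, for some L_k > 0; (iii) the function y ↦ W₁(μ_y, G(y,·)_#P_Z) is measurable and ∫ W₁(μ_y, G(y,·)_#P_Z) dP_Y(y) ≤ ε for some 0 < ε ≤ 1. Then W₁(μ_{ỹ}, G(ỹ,·)_#P_Z) ≤ (L_k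 + C_k)·ε^{1/(n+1)}·a/(2K) + 2ε^{1/(n+1)}/(S_n (a/(2K))^n a), where S_n = π^{n/2}/Γ(n/2 + 1). -/
open MeasureTheory Filter Topology Matrix

/-- The Wasserstein-1 distance: infimum over couplings of the expected distance. -/
noncomputable def W1 {E : Type*} [MeasurableSpace E] [NormedAddCommGroup E]
    (μ ν : Measure E) : ℝ :=
  (⨅ π ∈ {π : Measure (E × E) |
      π.map Prod.fst = μ ∧ π.map Prod.snd = ν ∧ IsProbabilityMeasure π},
    ∫⁻ p, ‖p.1 - p.2‖₊ ∂π).toReal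

/-- A measure has finite first moment. -/
def HasFiniteFirstMoment {E : Type*} [MeasurableSpace E] [NormedAddCommGroup E]
    (μ : Measure E) : Prop :=
  ∫⁻ x, ‖x‖₊ ∂μ ≠ ⊤

/-- Lebesgue volume of the unit ball in ℝ^n. -/
noncomputable def Sn (n : ℕ) : ℝ := Real.pi ^ ((n : ℝ) / 2) / Real.Gamma ((n : ℝ) / 2 + 1)

/-- The (topological) support of a measure: points all of whose open neighborhoods
have positive measure. -/
def measSupport {E : Type*} [TopologicalSpace E] [MeasurableSpace E]
    (μ : Measure E) : Set E := {x | ∀ U : Set E, IsOpen U → x ∈ U → 0 < μ U}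

section Aux
open ProbabilityTheory ENNReal Set

variable {E : Type*} [MeasurableSpace E] [NormedAddCommGroup E]

/-- The Wasserstein-1 distance as an extended nonnegative real. -/
noncomputable def W1e (μ ν : Measure E) : ℝ≥0∞ :=
  ⨅ π ∈ {π : Measure (E × E) |
      π.map Prod.fst = μ ∧ π.map Prod.snd = ν ∧ IsProbabilityMeasure π},
    ∫⁻ p, ‖p.1 - p.2‖₊ ∂π

lemma W1_eq_toReal (μ ν : Measure E) : W1 μ ν = (W1e μ ν).toReal := rfl

lemma W1_nonneg (μ ν : Measure E) : 0 ≤ W1 μ ν := ENNReal.toReal_nonneg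

lemma W1e_le_coupling {μ ν : Measure E} {π : Measure (E × E)}
    (h1 : π.map Prod.fst = μ) (h2 : π.map Prod.snd = ν) (h3 : IsProbabilityMeasure π) :
    W1e μ ν ≤ ∫⁻ p, ‖p.1 - p.2‖₊ ∂π :=
  iInf₂_le π ⟨h1, h2, h3⟩

variable [BorelSpace E] [SecondCountableTopology E]

set_option linter.unusedSectionVars false

lemma coupling_cost_le_moments {μ ν : Measure E} {π : Measure (E × E)}
    (h1 : π.map Prod.fst = μ) (h2 : π.map Prod.snd = ν) :
    ∫⁻ p, ‖p.1 - p.2‖₊ ∂π ≤ (∫⁻ x, ‖x‖₊ ∂μ) + ∫⁻ x, ‖x‖₊ ∂ν := by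
  have hm : Measurable fun x : E => (‖x‖₊ : ℝ≥0∞) := measurable_id.enorm
  calc ∫⁻ p, ‖p.1 - p.2‖₊ ∂π ≤ ∫⁻ p : E × E, (‖p.1‖₊ + ‖p.2‖₊ : ℝ≥0∞) ∂π := by
        refine lintegral_mono fun p => ?_
        rw [← enorm_eq_nnnorm, ← ofReal_norm, ← enorm_eq_nnnorm, ← ofReal_norm,
          ← enorm_eq_nnnorm, ← ofReal_norm, ← ENNReal.ofReal_add (norm_nonneg _) (norm_nonneg _)]
        exact ENNReal.ofReal_le_ofReal (norm_sub_le _ _)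
    _ = (∫⁻ p : E × E, (‖p.1‖₊ : ℝ≥0∞) ∂π) + ∫⁻ p : E × E, (‖p.2‖₊ : ℝ≥0∞) ∂π :=
        lintegral_add_left (measurable_fst.enorm) _
    _ = (∫⁻ x, ‖x‖₊ ∂μ) + ∫⁻ x, ‖x‖₊ ∂ν := by
        rw [← h1, ← h2, lintegral_map hm measurable_fst, lintegral_map hm measurable_snd]

lemma W1e_ne_top {μ ν : Measure E} [IsProbabilityMeasure μ] [IsProbabilityMeasure ν]
    (hμ : ∫⁻ x, ‖x‖₊ ∂μ ≠ ⊤) (hν : ∫⁻ x, ‖x‖₊ ∂ν ≠ ⊤) : W1e μ ν ≠ ⊤ := by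
  have h1 : (μ.prod ν).map Prod.fst = μ := Measure.fst_prod
  have h2 : (μ.prod ν).map Prod.snd = ν := Measure.snd_prod
  have := (W1e_le_coupling h1 h2 inferInstance).trans (coupling_cost_le_moments h1 h2)
  exact ne_top_of_le_ne_top (ENNReal.add_ne_top.mpr ⟨hμ, hν⟩) this

variable [StandardBorelSpace E] [Nonempty E]

set_option maxHeartbeats 1000000 in
/-- Gluing lemma for couplings. -/
lemma W1_glue (μ ν ρ : Measure E) (π₁ π₂ : Measure (E × E))
    (h₁f : π₁.map Prod.fst = μ) (h₁s : π₁.map Prod.snd = ν) (h₁p : IsProbabilityMeasure π₁)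
    (h₂f : π₂.map Prod.fst = ν) (h₂s : π₂.map Prod.snd = ρ) (h₂p : IsProbabilityMeasure π₂) :
    ∃ π : Measure (E × E), π.map Prod.fst = μ ∧ π.map Prod.snd = ρ ∧
      IsProbabilityMeasure π ∧
      ∫⁻ p, ‖p.1 - p.2‖₊ ∂π ≤ (∫⁻ p, ‖p.1 - p.2‖₊ ∂π₁) + ∫⁻ p, ‖p.1 - p.2‖₊ ∂π₂ := by
  classical
  haveI := h₁p; haveI := h₂p
  haveI : IsProbabilityMeasure ν := by
    rw [← h₁s]; exact Measure.isProbabilityMeasure_map measurable_snd.aemeasurable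
  set σ : Measure (E × E) := π₁.map Prod.swap with hσ
  haveI : IsProbabilityMeasure σ := Measure.isProbabilityMeasure_map measurable_swap.aemeasurable
  have hσfst : σ.fst = ν := by
    rw [Measure.fst, hσ, Measure.map_map measurable_fst measurable_swap]
    exact h₁s
  have hπ₂fst : π₂.fst = ν := h₂f
  set κ₁ := σ.condKernel with hκ₁
  set κ₂ := π₂.condKernel with hκ₂
  have hσeq : ν ⊗ₘ κ₁ = σ := by rw [← hσfst, hκ₁]; exact σ.disintegrate _
  have hπ₂eq : ν ⊗ₘ κ₂ = π₂ := by rw [← hπ₂fst, hκ₂]; exact π₂.disintegrate _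
  set τ : Measure (E × (E × E)) := ν ⊗ₘ (κ₁ ×ₖ κ₂) with hτ
  set π : Measure (E × E) := τ.map Prod.snd with hπdef
  have hnn : Measurable fun p : E × E => (‖p.1 - p.2‖₊ : ℝ≥0∞) :=
    (measurable_fst.sub measurable_snd).enorm
  have key1 : τ.map (fun q : E × E × E => q.2.1) = (ν ⊗ₘ κ₁).map Prod.snd := by
    ext s hs
    rw [Measure.map_apply (show Measurable fun q : E × E × E => q.2.1 from
        measurable_fst.comp measurable_snd) hs,
      Measure.map_apply measurable_snd hs,
      Measure.compProd_apply (measurable_snd hs),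
      Measure.compProd_apply (show MeasurableSet ((fun q : E × E × E => q.2.1) ⁻¹' s) from
        (measurable_fst.comp measurable_snd) hs)]
    refine lintegral_congr fun x => ?_
    have : (Prod.mk x ⁻¹' ((fun q : E × E × E => q.2.1) ⁻¹' s)) = s ×ˢ Set.univ := by
      ext p; simp [Set.mem_prod]
    rw [this, Kernel.prod_apply, Measure.prod_prod, measure_univ, mul_one]
    rfl
  have key2 : τ.map (fun q : E × E × E => q.2.2) = (ν ⊗ₘ κ₂).map Prod.snd := by
    ext s hs
    rw [Measure.map_apply (show Measurable fun q : E × E × E => q.2.2 from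
        measurable_snd.comp measurable_snd) hs,
      Measure.map_apply measurable_snd hs,
      Measure.compProd_apply (measurable_snd hs),
      Measure.compProd_apply (show MeasurableSet ((fun q : E × E × E => q.2.2) ⁻¹' s) from
        (measurable_snd.comp measurable_snd) hs)]
    refine lintegral_congr fun x => ?_
    have : (Prod.mk x ⁻¹' ((fun q : E × E × E => q.2.2) ⁻¹' s)) = Set.univ ×ˢ s := by
      ext p; simp [Set.mem_prod]
    rw [this, Kernel.prod_apply, Measure.prod_prod, measure_univ, one_mul]
    rfl
  have hπfst : π.map Prod.fst = μ := by
    rw [hπdef, Measure.map_map measurable_fst measurable_snd]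
    show τ.map (fun q : E × E × E => q.2.1) = μ
    rw [key1, hσeq, hσ, Measure.map_map measurable_snd measurable_swap]
    exact h₁f
  have hπsnd : π.map Prod.snd = ρ := by
    rw [hπdef, Measure.map_map measurable_snd measurable_snd]
    show τ.map (fun q : E × E × E => q.2.2) = ρ
    rw [key2, hπ₂eq]
    exact h₂s
  haveI hτp : IsProbabilityMeasure τ := by
    constructor
    rw [hτ, Measure.compProd_apply_univ, measure_univ]
  refine ⟨π, hπfst, hπsnd, Measure.isProbabilityMeasure_map measurable_snd.aemeasurable, ?_⟩
  have hcost : ∫⁻ p, ‖p.1 - p.2‖₊ ∂π = ∫⁻ q : E × E × E, (‖q.2.1 - q.2.2‖₊ : ℝ≥0∞) ∂τ := by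
    rw [hπdef, lintegral_map hnn measurable_snd]
  have hnn3 : Measurable fun q : E × E × E => (‖q.2.1 - q.2.2‖₊ : ℝ≥0∞) :=
    hnn.comp measurable_snd
  rw [hcost, hτ, Measure.lintegral_compProd hnn3]
  have inner_bound : ∀ x : E,
      ∫⁻ y, (‖y.1 - y.2‖₊ : ℝ≥0∞) ∂((κ₁ ×ₖ κ₂) x) ≤
        (∫⁻ b, (‖b - x‖₊ : ℝ≥0∞) ∂(κ₁ x)) + ∫⁻ c, (‖x - c‖₊ : ℝ≥0∞) ∂(κ₂ x) := by
    intro x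
    rw [Kernel.prod_apply]
    calc ∫⁻ y, (‖y.1 - y.2‖₊ : ℝ≥0∞) ∂((κ₁ x).prod (κ₂ x))
        ≤ ∫⁻ y : E × E, ((‖y.1 - x‖₊ : ℝ≥0∞) + (‖x - y.2‖₊ : ℝ≥0∞)) ∂((κ₁ x).prod (κ₂ x)) := by
          refine lintegral_mono fun y => ?_
          rw [← enorm_eq_nnnorm, ← ofReal_norm, ← enorm_eq_nnnorm, ← ofReal_norm,
            ← enorm_eq_nnnorm, ← ofReal_norm, ← ENNReal.ofReal_add (norm_nonneg _) (norm_nonneg _)]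
          refine ENNReal.ofReal_le_ofReal ?_
          calc ‖y.1 - y.2‖ = ‖(y.1 - x) + (x - y.2)‖ := by rw [sub_add_sub_cancel]
            _ ≤ ‖y.1 - x‖ + ‖x - y.2‖ := norm_add_le _ _
      _ = (∫⁻ y : E × E, (‖y.1 - x‖₊ : ℝ≥0∞) ∂((κ₁ x).prod (κ₂ x)))
            + ∫⁻ y : E × E, (‖x - y.2‖₊ : ℝ≥0∞) ∂((κ₁ x).prod (κ₂ x)) :=
          lintegral_add_left ((measurable_fst.sub measurable_const).enorm) _
      _ = (∫⁻ b, (‖b - x‖₊ : ℝ≥0∞) ∂(κ₁ x)) + ∫⁻ c, (‖x - c‖₊ : ℝ≥0∞) ∂(κ₂ x) := by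
          congr 1
          · rw [lintegral_prod _ (show Measurable fun y : E × E => (‖y.1 - x‖₊ : ℝ≥0∞) from
              (measurable_fst.sub measurable_const).enorm).aemeasurable]
            simp
          · rw [lintegral_prod _ (show Measurable fun y : E × E => (‖x - y.2‖₊ : ℝ≥0∞) from
              (measurable_const.sub measurable_snd).enorm).aemeasurable]
            simp
  have hI₁ : Measurable fun x => ∫⁻ b, (‖b - x‖₊ : ℝ≥0∞) ∂(κ₁ x) := by
    have : Measurable fun p : E × E => (‖p.2 - p.1‖₊ : ℝ≥0∞) :=
      (measurable_snd.sub measurable_fst).enorm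
    exact Measurable.lintegral_kernel_prod_right this
  calc ∫⁻ x, ∫⁻ y, (‖y.1 - y.2‖₊ : ℝ≥0∞) ∂((κ₁ ×ₖ κ₂) x) ∂ν
      ≤ ∫⁻ x, ((∫⁻ b, (‖b - x‖₊ : ℝ≥0∞) ∂(κ₁ x)) + ∫⁻ c, (‖x - c‖₊ : ℝ≥0∞) ∂(κ₂ x)) ∂ν :=
        lintegral_mono inner_bound
    _ = (∫⁻ x, ∫⁻ b, (‖b - x‖₊ : ℝ≥0∞) ∂(κ₁ x) ∂ν)
          + ∫⁻ x, ∫⁻ c, (‖x - c‖₊ : ℝ≥0∞) ∂(κ₂ x) ∂ν := lintegral_add_left hI₁ _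
    _ = (∫⁻ p, ‖p.1 - p.2‖₊ ∂π₁) + ∫⁻ p, ‖p.1 - p.2‖₊ ∂π₂ := by
        congr 1
        · rw [← Measure.lintegral_compProd (show Measurable fun p : E × E => (‖p.2 - p.1‖₊ : ℝ≥0∞) from (measurable_snd.sub measurable_fst).enorm),
            hσeq, hσ, lintegral_map (show Measurable fun p : E × E => (‖p.2 - p.1‖₊ : ℝ≥0∞) from (measurable_snd.sub measurable_fst).enorm)
              measurable_swap]
          rfl
        · rw [← Measure.lintegral_compProd hnn, hπ₂eq]

lemma W1e_triangle (μ ν ρ : Measure E) [IsProbabilityMeasure μ] [IsProbabilityMeasure ν]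
    [IsProbabilityMeasure ρ] (hμ : ∫⁻ x, ‖x‖₊ ∂μ ≠ ⊤) (hν : ∫⁻ x, ‖x‖₊ ∂ν ≠ ⊤)
    (hρ : ∫⁻ x, ‖x‖₊ ∂ρ ≠ ⊤) : W1e μ ρ ≤ W1e μ ν + W1e ν ρ := by
  have hμν := W1e_ne_top hμ hν
  have hνρ := W1e_ne_top hν hρ
  refine ENNReal.le_of_forall_pos_le_add fun η hη _ => ?_
  have hη2 : ((η : ℝ≥0∞) / 2) ≠ 0 := by
    simp [ENNReal.div_eq_zero_iff, hη.ne']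
  have h1 : W1e μ ν < W1e μ ν + η / 2 := ENNReal.lt_add_right hμν hη2
  have h2 : W1e ν ρ < W1e ν ρ + η / 2 := ENNReal.lt_add_right hνρ hη2
  rw [show W1e μ ν = ⨅ π ∈ {π : Measure (E × E) |
      π.map Prod.fst = μ ∧ π.map Prod.snd = ν ∧ IsProbabilityMeasure π},
    ∫⁻ p, ‖p.1 - p.2‖₊ ∂π from rfl, iInf_lt_iff] at h1
  obtain ⟨π₁, h1⟩ := h1
  rw [iInf_lt_iff] at h1
  obtain ⟨⟨h₁f, h₁s, h₁p⟩, hc₁⟩ := h1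
  rw [show W1e ν ρ = ⨅ π ∈ {π : Measure (E × E) |
      π.map Prod.fst = ν ∧ π.map Prod.snd = ρ ∧ IsProbabilityMeasure π},
    ∫⁻ p, ‖p.1 - p.2‖₊ ∂π from rfl, iInf_lt_iff] at h2
  obtain ⟨π₂, h2⟩ := h2
  rw [iInf_lt_iff] at h2
  obtain ⟨⟨h₂f, h₂s, h₂p⟩, hc₂⟩ := h2
  obtain ⟨π, hf, hs, hp, hcost⟩ := W1_glue μ ν ρ π₁ π₂ h₁f h₁s h₁p h₂f h₂s h₂p
  calc W1e μ ρ ≤ ∫⁻ p, ‖p.1 - p.2‖₊ ∂π := W1e_le_coupling hf hs hp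
    _ ≤ (∫⁻ p, ‖p.1 - p.2‖₊ ∂π₁) + ∫⁻ p, ‖p.1 - p.2‖₊ ∂π₂ := hcost
    _ ≤ (W1e μ ν + η / 2) + (W1e ν ρ + η / 2) := add_le_add hc₁.le hc₂.le
    _ = (W1e μ ν + W1e ν ρ) + (η / 2 + η / 2) := add_add_add_comm _ _ _ _
    _ = W1e μ ν + W1e ν ρ + η := by rw [ENNReal.add_halves]

/-- Triangle inequality for the Wasserstein-1 distance. -/
lemma W1_triangle (μ ν ρ : Measure E) [IsProbabilityMeasure μ] [IsProbabilityMeasure ν]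
    [IsProbabilityMeasure ρ] (hμ : ∫⁻ x, ‖x‖₊ ∂μ ≠ ⊤) (hν : ∫⁻ x, ‖x‖₊ ∂ν ≠ ⊤)
    (hρ : ∫⁻ x, ‖x‖₊ ∂ρ ≠ ⊤) : W1 μ ρ ≤ W1 μ ν + W1 ν ρ := by
  have hμν := W1e_ne_top hμ hν
  have hνρ := W1e_ne_top hν hρ
  have h := W1e_triangle μ ν ρ hμ hν hρ
  show (W1e μ ρ).toReal ≤ (W1e μ ν).toReal + (W1e ν ρ).toReal
  rw [← ENNReal.toReal_add hμν hνρ]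
  exact ENNReal.toReal_mono (ENNReal.add_ne_top.mpr ⟨hμν, hνρ⟩) h

lemma measSupport_compl_null {F : Type*} [MeasurableSpace F] [TopologicalSpace F]
    [SecondCountableTopology F] (μ : Measure F) : μ (measSupport μ)ᶜ = 0 := by
  obtain ⟨b, hbc, -, hbt⟩ := TopologicalSpace.exists_countable_basis F
  refine measure_mono_null (t := ⋃₀ {U ∈ b | μ U = 0}) ?_ ?_
  · intro x hx
    simp only [measSupport, Set.mem_compl_iff, Set.mem_setOf_eq, not_forall] at hx
    obtain ⟨U, hUo, hxU, hU0⟩ := hx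
    have hU0' : μ U = 0 := le_antisymm (not_lt.mp hU0) zero_le
    obtain ⟨V, hVb, hxV, hVU⟩ := hbt.exists_subset_of_mem_open hxU hUo
    exact ⟨V, ⟨hVb, measure_mono_null hVU hU0'⟩, hxV⟩
  · exact (measure_sUnion_null_iff (hbc.mono (Set.sep_subset _ _))).mpr fun U hU => hU.2

end Aux

set_option maxHeartbeats 1000000 in
/-- pointwise Wasserstein bound for a single observation. -/
theorem stmt_6 {n m d : ℕ} (hn : 1 ≤ n)
    (pY : EuclideanSpace ℝ (Fin n) → ℝ)
    (PY : Measure (EuclideanSpace ℝ (Fin n)))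
    (hPYprob : IsProbabilityMeasure PY)
    (hPY : PY = volume.withDensity (fun y => ENNReal.ofReal (pY y)))
    (K : ℝ) (hK : 0 < K)
    (DY : EuclideanSpace ℝ (Fin n) → (EuclideanSpace ℝ (Fin n) →L[ℝ] ℝ))
    (hderivY : ∀ y, HasFDerivAt pY (DY y) y)
    (hDYbound : ∀ y, ‖DY y‖ ≤ K)
    (ytil : EuclideanSpace ℝ (Fin n)) (a : ℝ) (ha : 0 < a) (hpa : pY ytil = a)
    (μ : EuclideanSpace ℝ (Fin n) → Measure (EuclideanSpace ℝ (Fin m)))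
    (hμprob : ∀ y, IsProbabilityMeasure (μ y))
    (hμmom : ∀ y, HasFiniteFirstMoment (μ y))
    (k : ℝ) (hk : k = a / (2 * K) + ‖ytil‖)
    (Ck : ℝ)
    (hCk : ∀ y₁ y₂ : EuclideanSpace ℝ (Fin n), ‖y₁‖ ≤ k → ‖y₂‖ ≤ k →
      W1 (μ y₁) (μ y₂) ≤ Ck * ‖y₁ - y₂‖)
    (PZ : Measure (EuclideanSpace ℝ (Fin d))) (hPZprob : IsProbabilityMeasure PZ)
    (G : EuclideanSpace ℝ (Fin n) → EuclideanSpace ℝ (Fin d) → EuclideanSpace ℝ (Fin m))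
    (hGmeas : ∀ y : EuclideanSpace ℝ (Fin n), Measurable (G y))
    (hGmom : ∀ y : EuclideanSpace ℝ (Fin n), HasFiniteFirstMoment (PZ.map (G y)))
    (Lk : ℝ) (hLk : 0 < Lk)
    (DG : EuclideanSpace ℝ (Fin n) → EuclideanSpace ℝ (Fin d) →
      (EuclideanSpace ℝ (Fin n) →L[ℝ] EuclideanSpace ℝ (Fin m)))
    (hderivG : ∀ z ∈ measSupport PZ, ∀ y : EuclideanSpace ℝ (Fin n), ‖y‖ ≤ k →
      HasFDerivAt (fun y' => G y' z) (DG y z) y ∧ ‖DG y z‖ ≤ Lk)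
    (hWmeas : Measurable fun y => W1 (μ y) (PZ.map (G y)))
    (ε : ℝ) (hε0 : 0 < ε) (hε1 : ε ≤ 1)
    (hint : ∫⁻ y, ENNReal.ofReal (W1 (μ y) (PZ.map (G y))) ∂PY ≤ ENNReal.ofReal ε) :
    W1 (μ ytil) (PZ.map (G ytil)) ≤
      (Lk + Ck) * (ε ^ (1 / ((n : ℝ) + 1)) * a / (2 * K)) +
        2 * ε ^ (1 / ((n : ℝ) + 1)) / (Sn n * (a / (2 * K)) ^ n * a) := by
  classical
  haveI : Nonempty (Fin n) := ⟨⟨0, hn⟩⟩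
  have hδ0 : 0 < a / (2 * K) := by positivity
  set δ : ℝ := a / (2 * K) with hδdef
  set e1 : ℝ := ε ^ (1 / ((n : ℝ) + 1)) with he1def
  have he1pos : 0 < e1 := Real.rpow_pos_of_pos hε0 _
  have he1le : e1 ≤ 1 := Real.rpow_le_one hε0.le hε1 (by positivity)
  set r : ℝ := e1 * δ with hrdef
  have hr0 : 0 < r := mul_pos he1pos hδ0
  have hrδ : r ≤ δ := by nlinarith
  have hytilk : ‖ytil‖ ≤ k := by rw [hk]; linarith
  have hSn0 : 0 < Sn n :=
    div_pos (Real.rpow_pos_of_pos Real.pi_pos _) (Real.Gamma_pos_of_pos (by positivity))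
  have hpYcont : Continuous pY :=
    continuous_iff_continuousAt.mpr fun y => (hderivY y).continuousAt
  set B := Metric.closedBall ytil r with hBdef
  have hmemB : ∀ y ∈ B, ‖y - ytil‖ ≤ r := by
    intro y hy
    rwa [hBdef, Metric.mem_closedBall, dist_eq_norm] at hy
  have hmemBk : ∀ y ∈ B, ‖y‖ ≤ k := by
    intro y hy
    have h1 := hmemB y hy
    have h2 : ‖y‖ - ‖ytil‖ ≤ ‖y - ytil‖ := norm_sub_norm_le _ _
    rw [hk]; linarith
  -- lower bound for the density on B
  have hpYlb : ∀ y ∈ B, a / 2 ≤ pY y := by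
    intro y hy
    have hyd := hmemB y hy
    have hlip : ‖pY y - pY ytil‖ ≤ K * ‖y - ytil‖ :=
      convex_univ.norm_image_sub_le_of_norm_hasFDerivWithin_le
        (fun x _ => (hderivY x).hasFDerivWithinAt) (fun x _ => hDYbound x)
        (Set.mem_univ ytil) (Set.mem_univ y)
    rw [hpa, Real.norm_eq_abs, abs_le] at hlip
    have h1 : K * ‖y - ytil‖ ≤ K * δ := mul_le_mul_of_nonneg_left (hyd.trans hrδ) hK.le
    have h2 : K * δ = a / 2 := by rw [hδdef]; field_simp
    linarith [hlip.1]
  -- Sn n equals the constant in the volume formula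
  have hSneq : Real.sqrt Real.pi ^ n / Real.Gamma ((n : ℝ) / 2 + 1) = Sn n := by
    rw [Sn]
    congr 1
    rw [Real.sqrt_eq_rpow, ← Real.rpow_natCast (Real.pi ^ ((1:ℝ)/2)) n,
      ← Real.rpow_mul Real.pi_pos.le]
    congr 1
    ring
  have hvol : volume B = ENNReal.ofReal (Sn n * r ^ n) := by
    rw [hBdef, EuclideanSpace.volume_closedBall, Fintype.card_fin,
      ← ENNReal.ofReal_pow hr0.le, ← ENNReal.ofReal_mul (by positivity)]
    rw [hSneq]
    congr 1
    ring
  have hPYB : ENNReal.ofReal (a / 2 * (Sn n * r ^ n)) ≤ PY B := by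
    have hBmeas : MeasurableSet B := measurableSet_closedBall
    rw [hPY, withDensity_apply _ hBmeas]
    calc ENNReal.ofReal (a / 2 * (Sn n * r ^ n))
        = ENNReal.ofReal (a / 2) * volume B := by
          rw [hvol, ← ENNReal.ofReal_mul (by positivity)]
      _ = ∫⁻ _ in B, ENNReal.ofReal (a / 2) ∂volume := (setLIntegral_const _ _).symm
      _ ≤ ∫⁻ y in B, ENNReal.ofReal (pY y) ∂volume :=
          setLIntegral_mono (hpYcont.measurable.ennreal_ofReal) fun y hy =>
            ENNReal.ofReal_le_ofReal (hpYlb y hy)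
  haveI hGprob : ∀ y, IsProbabilityMeasure (PZ.map (G y)) := fun y =>
    Measure.isProbabilityMeasure_map (hGmeas y).aemeasurable
  have hsuppnull : PZ (measSupport PZ)ᶜ = 0 := measSupport_compl_null PZ
  -- Lipschitz bound on the generator pushforwards
  have hGlip : ∀ y ∈ B, W1 (PZ.map (G y)) (PZ.map (G ytil)) ≤ Lk * r := by
    intro y hy
    have hyd := hmemB y hy
    have hyk := hmemBk y hy
    have hGz : ∀ z ∈ measSupport PZ, ‖G y z - G ytil z‖ ≤ Lk * r := by
      intro z hz
      have hlip : ‖G y z - G ytil z‖ ≤ Lk * ‖y - ytil‖ :=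
        (convex_closedBall (0 : EuclideanSpace ℝ (Fin n)) k).norm_image_sub_le_of_norm_hasFDerivWithin_le
          (fun x hx => ((hderivG z hz x (mem_closedBall_zero_iff.mp hx)).1).hasFDerivWithinAt)
          (fun x hx => (hderivG z hz x (mem_closedBall_zero_iff.mp hx)).2)
          (mem_closedBall_zero_iff.mpr hytilk) (mem_closedBall_zero_iff.mpr hyk)
      calc ‖G y z - G ytil z‖ ≤ Lk * ‖y - ytil‖ := hlip
        _ ≤ Lk * r := mul_le_mul_of_nonneg_left hyd hLk.le
    set π := PZ.map (fun z => (G y z, G ytil z)) with hπ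
    have hmeaspair : Measurable fun z => (G y z, G ytil z) :=
      (hGmeas y).prodMk (hGmeas ytil)
    have hf : π.map Prod.fst = PZ.map (G y) := by
      rw [hπ, Measure.map_map measurable_fst hmeaspair]; rfl
    have hs : π.map Prod.snd = PZ.map (G ytil) := by
      rw [hπ, Measure.map_map measurable_snd hmeaspair]; rfl
    have hπp : IsProbabilityMeasure π := Measure.isProbabilityMeasure_map hmeaspair.aemeasurable
    have hcost : ∫⁻ p, ‖p.1 - p.2‖₊ ∂π ≤ ENNReal.ofReal (Lk * r) := by
      rw [hπ, lintegral_map (show Measurable fun p : EuclideanSpace ℝ (Fin m) × EuclideanSpace ℝ (Fin m) =>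
        (‖p.1 - p.2‖₊ : ENNReal) from (measurable_fst.sub measurable_snd).enorm) hmeaspair]
      show ∫⁻ z, (‖G y z - G ytil z‖₊ : ENNReal) ∂PZ ≤ ENNReal.ofReal (Lk * r)
      have haein : ∀ᵐ z ∂PZ, z ∈ measSupport PZ := by
        rw [MeasureTheory.ae_iff]
        exact hsuppnull
      have hae : ∀ᵐ z ∂PZ, (‖G y z - G ytil z‖₊ : ENNReal) ≤ ENNReal.ofReal (Lk * r) := by
        filter_upwards [haein] with z hz
        rw [← enorm_eq_nnnorm, ← ofReal_norm]
        exact ENNReal.ofReal_le_ofReal (hGz z hz)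
      calc ∫⁻ z, (‖G y z - G ytil z‖₊ : ENNReal) ∂PZ
          ≤ ∫⁻ _, ENNReal.ofReal (Lk * r) ∂PZ := lintegral_mono_ae hae
        _ = ENNReal.ofReal (Lk * r) := by rw [lintegral_const, measure_univ, mul_one]
    rw [W1_eq_toReal]
    exact ENNReal.toReal_le_of_le_ofReal (by positivity)
      ((W1e_le_coupling hf hs hπp).trans hcost)
  -- Ck is nonnegative
  have hCk0 : 0 ≤ Ck := by
    set v : EuclideanSpace ℝ (Fin n) := EuclideanSpace.single ⟨0, hn⟩ (1 : ℝ) with hv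
    have hnv : ‖v‖ = 1 := by rw [hv, EuclideanSpace.norm_single]; norm_num
    set y₂ : EuclideanSpace ℝ (Fin n) := ytil + δ • v with hy₂
    have hy₂k : ‖y₂‖ ≤ k := by
      calc ‖y₂‖ ≤ ‖ytil‖ + ‖δ • v‖ := norm_add_le _ _
        _ = ‖ytil‖ + δ := by rw [norm_smul, hnv, Real.norm_eq_abs, abs_of_pos hδ0, mul_one]
        _ = k := by rw [hk]; ring
    have hdiff : ‖ytil - y₂‖ = δ := by
      have : ytil - y₂ = -(δ • v) := by rw [hy₂]; abel
      rw [this, norm_neg, norm_smul, hnv, Real.norm_eq_abs, abs_of_pos hδ0, mul_one]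
    have h := hCk ytil y₂ hytilk hy₂k
    rw [hdiff] at h
    have h0 := W1_nonneg (μ ytil) (μ y₂)
    nlinarith
  -- triangle inequality over points of the ball
  have htri : ∀ y ∈ B, W1 (μ ytil) (PZ.map (G ytil)) ≤
      (Lk + Ck) * r + W1 (μ y) (PZ.map (G y)) := by
    intro y hy
    have hyd := hmemB y hy
    have hyk := hmemBk y hy
    haveI := hμprob ytil; haveI := hμprob y
    have t1 : W1 (μ ytil) (PZ.map (G ytil)) ≤
        W1 (μ ytil) (μ y) + W1 (μ y) (PZ.map (G ytil)) :=
      W1_triangle _ _ _ (hμmom ytil) (hμmom y) (hGmom ytil)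
    have t2 : W1 (μ y) (PZ.map (G ytil)) ≤
        W1 (μ y) (PZ.map (G y)) + W1 (PZ.map (G y)) (PZ.map (G ytil)) :=
      W1_triangle _ _ _ (hμmom y) (hGmom y) (hGmom ytil)
    have hC : W1 (μ ytil) (μ y) ≤ Ck * r := by
      have h := hCk ytil y hytilk hyk
      have h2 : ‖ytil - y‖ ≤ r := by rwa [norm_sub_rev]
      nlinarith
    have hL := hGlip y hy
    linarith
  -- averaging argument
  set W := W1 (μ ytil) (PZ.map (G ytil)) with hWdef
  set c := (Lk + Ck) * r with hcdef
  set mm := a / 2 * (Sn n * r ^ n) with hmdef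
  have hm0 : 0 < mm := by positivity
  have hkey : ENNReal.ofReal (W - c) * ENNReal.ofReal mm ≤ ENNReal.ofReal ε := by
    calc ENNReal.ofReal (W - c) * ENNReal.ofReal mm
        ≤ ENNReal.ofReal (W - c) * PY B := mul_le_mul_right hPYB _
      _ = ∫⁻ _ in B, ENNReal.ofReal (W - c) ∂PY := (setLIntegral_const _ _).symm
      _ ≤ ∫⁻ y in B, ENNReal.ofReal (W1 (μ y) (PZ.map (G y))) ∂PY :=
          setLIntegral_mono (hWmeas.ennreal_ofReal) fun y hy =>
            ENNReal.ofReal_le_ofReal (by have := htri y hy; linarith)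
      _ ≤ ∫⁻ y, ENNReal.ofReal (W1 (μ y) (PZ.map (G y))) ∂PY :=
          setLIntegral_le_lintegral _ _
      _ ≤ ENNReal.ofReal ε := hint
  have hWc : W - c ≤ ε / mm := by
    by_cases hpos : 0 ≤ W - c
    · have h1 : ENNReal.ofReal ((W - c) * mm) ≤ ENNReal.ofReal ε := by
        rw [ENNReal.ofReal_mul hpos]; exact hkey
      have h2 : (W - c) * mm ≤ ε := (ENNReal.ofReal_le_ofReal_iff hε0.le).mp h1
      exact (le_div_iff₀ hm0).mpr h2
    · have : 0 < ε / mm := by positivity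
      linarith
  -- final algebra
  have hfinal : ε / mm = 2 * e1 / (Sn n * δ ^ n * a) := by
    have hxn : (0:ℝ) ≤ 1 / ((n : ℝ) + 1) := by positivity
    set P : ℝ := ε ^ ((1 / ((n : ℝ) + 1)) * n) with hP
    have hP0 : 0 < P := Real.rpow_pos_of_pos hε0 _
    have hsum : (1 / ((n : ℝ) + 1)) * n + 1 / ((n : ℝ) + 1) = 1 := by
      have hne : ((n : ℝ) + 1) ≠ 0 := by positivity
      field_simp
    have hεs : ε = P * e1 := by
      rw [hP, he1def, ← Real.rpow_add hε0, hsum, Real.rpow_one]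
    have hrn : r ^ n = P * δ ^ n := by
      rw [hrdef, mul_pow, hP, he1def, ← Real.rpow_natCast (ε ^ (1 / ((n : ℝ) + 1))) n,
        ← Real.rpow_mul hε0.le]
    rw [div_eq_div_iff hm0.ne' (by positivity)]
    rw [hmdef]
    linear_combination (Sn n * δ ^ n * a) * hεs - (e1 * a * Sn n) * hrn
  have hgoal1 : (Lk + Ck) * (e1 * a / (2 * K)) = c := by
    rw [hcdef, hrdef, hδdef]; ring
  rw [hgoal1, ← hfinal]
  linarith
end

section
/- Let n ≥ 1, let P_Y be a probability measure on ℝ^n with differentiable density p_Y satisfying ‖∇p_Y(y)‖ ≤ K for all y and some K > 0. Let (μ_y)_{y∈ℝ^n} be a family of probability measures on ℝ^m with finite first moments such that for every r > 0 there is C_r < ∞ with W₁(μ_{y₁}, μ_{y₂}) ≤ C_r‖y₁ − y₂‖ whenever ‖y₁‖, ‖y₂‖ ≤ r. Let P_Z be a probability measure on ℝ^d and let (G^ε)_{ε>0} be a family of maps G^ε : ℝ^n × ℝ^d → ℝ^m such that every pushforward G^ε(y,·)_#P_Z has finite first moment, such that there is a constant L < ∞ with W₁(G^ε(y₁,·)_#P_Z,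 G^ε(y₂,·)_#P_Z) ≤ L‖y₁ − y₂‖ for all ε > 0 and all y₁, y₂ ∈ ℝ^n, and such that for every ε > 0 the function y ↦ W₁(μ_y, G^ε(y,·)_#P_Z) is measurable with ∫ W₁(μ_y, G^ε(y,·)_#P_Z) dP_Y(y) ≤ ε. Then for every y ∈ ℝ^n with p_Y(y) > 0, W₁(μ_y, G^ε(y,·)_#P_Z) → 0 as ε → 0. -/
open MeasureTheory Filter Topology Matrix

section StmtNineAuxSection
open ProbabilityTheory
open scoped ENNReal

namespace StmtNineAux

variable {m : ℕ}

local notation "E" => EuclideanSpace ℝ (Fin m)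

/-- The coupling set. -/
def cpl (μ ν : Measure E) : Set (Measure (E × E)) :=
  {π : Measure (E × E) |
      π.map Prod.fst = μ ∧ π.map Prod.snd = ν ∧ IsProbabilityMeasure π}

/-- ENNReal-valued Wasserstein cost. -/
noncomputable def wc (μ ν : Measure E) : ℝ≥0∞ :=
  ⨅ π ∈ cpl μ ν, ∫⁻ p, ‖p.1 - p.2‖₊ ∂π

lemma W1_eq (μ ν : Measure E) : W1 μ ν = (wc μ ν).toReal := rfl

lemma prod_mem_cpl (μ ν : Measure E) [IsProbabilityMeasure μ] [IsProbabilityMeasure ν] :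
    μ.prod ν ∈ cpl μ ν := by
  refine ⟨?_, ?_, inferInstance⟩
  · simp [Measure.map_fst_prod]
  · simp [Measure.map_snd_prod]

lemma lintegral_fst_of_cpl {μ ν : Measure E} {π : Measure (E × E)} (hπ : π ∈ cpl μ ν)
    (f : E → ℝ≥0∞) (hf : Measurable f) :
    ∫⁻ p, f p.1 ∂π = ∫⁻ x, f x ∂μ := by
  rw [← hπ.1, lintegral_map hf measurable_fst]

lemma lintegral_snd_of_cpl {μ ν : Measure E} {π : Measure (E × E)} (hπ : π ∈ cpl μ ν)
    (f : E → ℝ≥0∞) (hf : Measurable f) :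
    ∫⁻ p, f p.2 ∂π = ∫⁻ x, f x ∂ν := by
  rw [← hπ.2.1, lintegral_map hf measurable_snd]

lemma wc_lt_top (μ ν : Measure E) [IsProbabilityMeasure μ] [IsProbabilityMeasure ν]
    (hμ : ∫⁻ x, ‖x‖₊ ∂μ ≠ ⊤) (hν : ∫⁻ x, ‖x‖₊ ∂ν ≠ ⊤) : wc μ ν < ⊤ := by
  have hmem := prod_mem_cpl μ ν
  have hle : wc μ ν ≤ ∫⁻ p, ‖p.1 - p.2‖₊ ∂(μ.prod ν) := biInf_le _ hmem
  have hbound : ∫⁻ p, ‖p.1 - p.2‖₊ ∂(μ.prod ν)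
      ≤ (∫⁻ x, ‖x‖₊ ∂μ) + ∫⁻ x, ‖x‖₊ ∂ν := by
    have h1 : ∫⁻ (p : E × E), (‖p.1‖₊ : ℝ≥0∞) + ‖p.2‖₊ ∂(μ.prod ν)
        = (∫⁻ x, ‖x‖₊ ∂μ) + ∫⁻ x, ‖x‖₊ ∂ν := by
      rw [lintegral_add_left (measurable_fst.nnnorm.coe_nnreal_ennreal)]
      rw [lintegral_fst_of_cpl hmem _ measurable_nnnorm.coe_nnreal_ennreal,
        lintegral_snd_of_cpl hmem _ measurable_nnnorm.coe_nnreal_ennreal]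
    rw [← h1]
    refine lintegral_mono fun p => ?_
    rw [← ENNReal.coe_add]; exact ENNReal.coe_le_coe.mpr (nnnorm_sub_le p.1 p.2)
  refine lt_of_le_of_lt (hle.trans hbound) ?_
  exact ENNReal.add_lt_top.mpr ⟨lt_top_iff_ne_top.mpr hμ, lt_top_iff_ne_top.mpr hν⟩

end StmtNineAux

namespace StmtNineAux2
open StmtNineAux

variable {m : ℕ}
local notation "E" => EuclideanSpace ℝ (Fin m)

lemma cost_triangle {μ₁ μ₂ μ₃ : Measure E}
    [IsProbabilityMeasure μ₁] [IsProbabilityMeasure μ₂] [IsProbabilityMeasure μ₃]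
    {π₁ π₂ : Measure (E × E)} (h₁ : π₁ ∈ cpl μ₁ μ₂) (h₂ : π₂ ∈ cpl μ₂ μ₃) :
    wc μ₁ μ₃ ≤ (∫⁻ p, ‖p.1 - p.2‖₊ ∂π₁) + ∫⁻ p, ‖p.1 - p.2‖₊ ∂π₂ := by
  obtain ⟨h₁f, h₁s, h₁p⟩ := h₁
  obtain ⟨h₂f, h₂s, h₂p⟩ := h₂
  -- swap π₁ to get a measure with first marginal μ₂
  set ρ₁ : Measure (E × E) := π₁.map Prod.swap with hρ₁def
  have hρ₁p : IsProbabilityMeasure ρ₁ := Measure.isProbabilityMeasure_map measurable_swap.aemeasurable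
  have hρ₁fst : ρ₁.fst = μ₂ := by
    rw [Measure.fst, hρ₁def, Measure.map_map measurable_fst measurable_swap]
    exact h₁s
  have hπ₂fst : π₂.fst = μ₂ := h₂f
  set κ₁ := ρ₁.condKernel with hκ₁
  set κ₂ := π₂.condKernel with hκ₂
  have hd₁ : μ₂ ⊗ₘ κ₁ = ρ₁ := by rw [← hρ₁fst]; exact ρ₁.disintegrate κ₁
  have hd₂ : μ₂ ⊗ₘ κ₂ = π₂ := by rw [← hπ₂fst]; exact π₂.disintegrate κ₂
  set τ : Measure (E × (E × E)) := μ₂ ⊗ₘ (κ₁ ×ₖ κ₂) with hτ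
  have hτp : IsProbabilityMeasure τ := by infer_instance
  set π₃ : Measure (E × E) := τ.map Prod.snd with hπ₃
  have hπ₃p : IsProbabilityMeasure π₃ := Measure.isProbabilityMeasure_map measurable_snd.aemeasurable
  -- first marginal of π₃
  have hfst : π₃.map Prod.fst = μ₁ := by
    ext s hs
    rw [hπ₃, Measure.map_map measurable_fst measurable_snd,
      Measure.map_apply (measurable_fst.comp measurable_snd) hs, hτ,
      Measure.compProd_apply (hs.preimage (measurable_fst.comp measurable_snd))]
    have : ∀ x : E, (κ₁ ×ₖ κ₂) x (Prod.mk x ⁻¹' ((Prod.fst ∘ Prod.snd : E × (E × E) → E) ⁻¹' s))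
        = κ₁ x s := by
      intro x
      have : (Prod.mk x ⁻¹' ((Prod.fst ∘ Prod.snd : E × (E × E) → E) ⁻¹' s)) = s ×ˢ Set.univ := by
        ext q; simp [Set.mem_prod]
      rw [this, Kernel.prod_apply, Measure.prod_prod, measure_univ, mul_one]
    simp_rw [this]
    have : ∫⁻ x, κ₁ x s ∂μ₂ = (μ₂ ⊗ₘ κ₁) (Set.univ ×ˢ s) := by
      rw [Measure.compProd_apply_prod MeasurableSet.univ hs, Measure.restrict_univ]
    rw [this, hd₁, hρ₁def, Measure.map_apply measurable_swap ((MeasurableSet.univ).prod hs)]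
    have : (Prod.swap ⁻¹' (Set.univ ×ˢ s) : Set (E × E)) = s ×ˢ Set.univ := by
      ext q; simp
    rw [this, ← h₁f, Measure.map_apply measurable_fst hs]
    congr 1
    ext q; simp
  -- second marginal of π₃
  have hsnd : π₃.map Prod.snd = μ₃ := by
    ext s hs
    rw [hπ₃, Measure.map_map measurable_snd measurable_snd,
      Measure.map_apply (measurable_snd.comp measurable_snd) hs, hτ,
      Measure.compProd_apply (hs.preimage (measurable_snd.comp measurable_snd))]
    have : ∀ x : E, (κ₁ ×ₖ κ₂) x (Prod.mk x ⁻¹' ((Prod.snd ∘ Prod.snd : E × (E × E) → E) ⁻¹' s))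
        = κ₂ x s := by
      intro x
      have : (Prod.mk x ⁻¹' ((Prod.snd ∘ Prod.snd : E × (E × E) → E) ⁻¹' s)) = Set.univ ×ˢ s := by
        ext q; simp
      rw [this, Kernel.prod_apply, Measure.prod_prod, measure_univ, one_mul]
    simp_rw [this]
    have : ∫⁻ x, κ₂ x s ∂μ₂ = (μ₂ ⊗ₘ κ₂) (Set.univ ×ˢ s) := by
      rw [Measure.compProd_apply_prod MeasurableSet.univ hs, Measure.restrict_univ]
    rw [this, hd₂, ← h₂s, Measure.map_apply measurable_snd hs]
    congr 1
    ext q; simp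
  have hπ₃mem : π₃ ∈ cpl μ₁ μ₃ := ⟨hfst, hsnd, hπ₃p⟩
  refine le_trans (biInf_le _ hπ₃mem) ?_
  -- cost bound
  have hcost : ∫⁻ p, ‖p.1 - p.2‖₊ ∂π₃
      ≤ (∫⁻ p : E × (E × E), (‖p.2.1 - p.1‖₊ : ℝ≥0∞) ∂τ)
        + ∫⁻ p : E × (E × E), (‖p.1 - p.2.2‖₊ : ℝ≥0∞) ∂τ := by
    rw [hπ₃, lintegral_map (show Measurable (fun p : E × E => (‖p.1 - p.2‖₊ : ℝ≥0∞)) from (measurable_fst.sub measurable_snd).nnnorm.coe_nnreal_ennreal) measurable_snd]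
    rw [← lintegral_add_left ((show Measurable (fun p : E × (E × E) => (‖p.2.1 - p.1‖₊ : ℝ≥0∞)) from (measurable_snd.fst.sub measurable_fst).nnnorm.coe_nnreal_ennreal))]
    refine lintegral_mono fun p => ?_
    have : p.2.1 - p.2.2 = (p.2.1 - p.1) + (p.1 - p.2.2) := by abel
    rw [this, ← ENNReal.coe_add]
    exact ENNReal.coe_le_coe.mpr (nnnorm_add_le _ _)
  have hA : ∫⁻ p : E × (E × E), (‖p.2.1 - p.1‖₊ : ℝ≥0∞) ∂τ = ∫⁻ p, ‖p.1 - p.2‖₊ ∂π₁ := by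
    rw [hτ, Measure.lintegral_compProd ((show Measurable (fun p : E × (E × E) => (‖p.2.1 - p.1‖₊ : ℝ≥0∞)) from (measurable_snd.fst.sub measurable_fst).nnnorm.coe_nnreal_ennreal))]
    have h1 : ∀ x : E, ∫⁻ q : E × E, (‖q.1 - x‖₊ : ℝ≥0∞) ∂(κ₁ ×ₖ κ₂) x
        = ∫⁻ a, (‖a - x‖₊ : ℝ≥0∞) ∂κ₁ x := by
      intro x
      rw [Kernel.lintegral_prod _ _ _ ((show Measurable (fun q : E × E => (‖q.1 - x‖₊ : ℝ≥0∞)) from (measurable_fst.sub measurable_const).nnnorm.coe_nnreal_ennreal))]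
      simp [lintegral_const, measure_univ]
    simp_rw [h1]
    have h2 : ∫⁻ x, ∫⁻ a, (‖a - x‖₊ : ℝ≥0∞) ∂κ₁ x ∂μ₂
        = ∫⁻ p : E × E, (‖p.2 - p.1‖₊ : ℝ≥0∞) ∂(μ₂ ⊗ₘ κ₁) := by
      rw [Measure.lintegral_compProd ((show Measurable (fun p : E × E => (‖p.2 - p.1‖₊ : ℝ≥0∞)) from (measurable_snd.sub measurable_fst).nnnorm.coe_nnreal_ennreal))]
    rw [h2, hd₁, hρ₁def, lintegral_map ((show Measurable (fun p : E × E => (‖p.2 - p.1‖₊ : ℝ≥0∞)) from (measurable_snd.sub measurable_fst).nnnorm.coe_nnreal_ennreal))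
      measurable_swap]
    rfl
  have hB : ∫⁻ p : E × (E × E), (‖p.1 - p.2.2‖₊ : ℝ≥0∞) ∂τ = ∫⁻ p, ‖p.1 - p.2‖₊ ∂π₂ := by
    rw [hτ, Measure.lintegral_compProd ((show Measurable (fun p : E × (E × E) => (‖p.1 - p.2.2‖₊ : ℝ≥0∞)) from (measurable_fst.sub measurable_snd.snd).nnnorm.coe_nnreal_ennreal))]
    have h1 : ∀ x : E, ∫⁻ q : E × E, (‖x - q.2‖₊ : ℝ≥0∞) ∂(κ₁ ×ₖ κ₂) x
        = ∫⁻ b, (‖x - b‖₊ : ℝ≥0∞) ∂κ₂ x := by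
      intro x
      rw [Kernel.lintegral_prod _ _ _ ((show Measurable (fun q : E × E => (‖x - q.2‖₊ : ℝ≥0∞)) from (measurable_const.sub measurable_snd).nnnorm.coe_nnreal_ennreal))]
      simp [lintegral_const, measure_univ]
    simp_rw [h1]
    have h2 : ∫⁻ x, ∫⁻ b, (‖x - b‖₊ : ℝ≥0∞) ∂κ₂ x ∂μ₂
        = ∫⁻ p : E × E, (‖p.1 - p.2‖₊ : ℝ≥0∞) ∂(μ₂ ⊗ₘ κ₂) := by
      rw [Measure.lintegral_compProd ((show Measurable (fun p : E × E => (‖p.1 - p.2‖₊ : ℝ≥0∞)) from (measurable_fst.sub measurable_snd).nnnorm.coe_nnreal_ennreal))]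
    rw [h2, hd₂]
  rw [← hA, ← hB]
  exact hcost


lemma wc_triangle (μ₁ μ₂ μ₃ : Measure E)
    [IsProbabilityMeasure μ₁] [IsProbabilityMeasure μ₂] [IsProbabilityMeasure μ₃] :
    wc μ₁ μ₃ ≤ wc μ₁ μ₂ + wc μ₂ μ₃ := by
  have e1 : wc μ₁ μ₂ = ⨅ p : cpl μ₁ μ₂, ∫⁻ q, ‖q.1 - q.2‖₊ ∂(p : Measure (E × E)) := by
    rw [wc, iInf_subtype']
  have e2 : wc μ₂ μ₃ = ⨅ p : cpl μ₂ μ₃, ∫⁻ q, ‖q.1 - q.2‖₊ ∂(p : Measure (E × E)) := by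
    rw [wc, iInf_subtype']
  rw [e1, e2, ENNReal.iInf_add]
  refine le_iInf fun p => ?_
  rw [ENNReal.add_iInf]
  refine le_iInf fun q => ?_
  exact cost_triangle p.2 q.2

/-- Real-valued triangle inequality, under finite first moments. -/
lemma W1_triangle (μ₁ μ₂ μ₃ : Measure E)
    [IsProbabilityMeasure μ₁] [IsProbabilityMeasure μ₂] [IsProbabilityMeasure μ₃]
    (h1 : ∫⁻ x, ‖x‖₊ ∂μ₁ ≠ ⊤) (h2 : ∫⁻ x, ‖x‖₊ ∂μ₂ ≠ ⊤) (h3 : ∫⁻ x, ‖x‖₊ ∂μ₃ ≠ ⊤) :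
    W1 μ₁ μ₃ ≤ W1 μ₁ μ₂ + W1 μ₂ μ₃ := by
  have f12 := wc_lt_top μ₁ μ₂ h1 h2
  have f23 := wc_lt_top μ₂ μ₃ h2 h3
  rw [W1_eq, W1_eq, W1_eq, ← ENNReal.toReal_add f12.ne f23.ne]
  exact ENNReal.toReal_mono (by simp [ENNReal.add_ne_top, f12.ne, f23.ne])
    (wc_triangle μ₁ μ₂ μ₃)

lemma W1_nonneg (μ ν : Measure E) : 0 ≤ W1 μ ν := ENNReal.toReal_nonneg

end StmtNineAux2


end StmtNineAuxSection

/-- a perfectly learned family of generative models recovers every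
posterior with positive evidence. -/
theorem stmt_9 {n m d : ℕ} (hn : 1 ≤ n)
    (pY : EuclideanSpace ℝ (Fin n) → ℝ)
    (PY : Measure (EuclideanSpace ℝ (Fin n)))
    (hPYprob : IsProbabilityMeasure PY)
    (hPY : PY = volume.withDensity (fun y => ENNReal.ofReal (pY y)))
    (K : ℝ) (hK : 0 < K)
    (DY : EuclideanSpace ℝ (Fin n) → (EuclideanSpace ℝ (Fin n) →L[ℝ] ℝ))
    (hderivY : ∀ y, HasFDerivAt pY (DY y) y)
    (hDYbound : ∀ y, ‖DY y‖ ≤ K)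
    (μ : EuclideanSpace ℝ (Fin n) → Measure (EuclideanSpace ℝ (Fin m)))
    (hμprob : ∀ y, IsProbabilityMeasure (μ y))
    (hμmom : ∀ y, HasFiniteFirstMoment (μ y))
    (hμlip : ∀ r > (0 : ℝ), ∃ C : ℝ, ∀ y₁ y₂ : EuclideanSpace ℝ (Fin n),
      ‖y₁‖ ≤ r → ‖y₂‖ ≤ r → W1 (μ y₁) (μ y₂) ≤ C * ‖y₁ - y₂‖)
    (PZ : Measure (EuclideanSpace ℝ (Fin d))) (hPZprob : IsProbabilityMeasure PZ)
    (Gf : ℝ → EuclideanSpace ℝ (Fin n) → EuclideanSpace ℝ (Fin d) → EuclideanSpace ℝ (Fin m))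
    (hGmeas : ∀ ε > (0 : ℝ), ∀ y : EuclideanSpace ℝ (Fin n), Measurable (Gf ε y))
    (hGmom : ∀ ε > (0 : ℝ), ∀ y : EuclideanSpace ℝ (Fin n),
      HasFiniteFirstMoment (PZ.map (Gf ε y)))
    (L : ℝ)
    (hGlip : ∀ ε > (0 : ℝ), ∀ y₁ y₂ : EuclideanSpace ℝ (Fin n),
      W1 (PZ.map (Gf ε y₁)) (PZ.map (Gf ε y₂)) ≤ L * ‖y₁ - y₂‖)
    (hWmeas : ∀ ε > (0 : ℝ), Measurable fun y => W1 (μ y) (PZ.map (Gf ε y)))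
    (hint : ∀ ε > (0 : ℝ),
      ∫⁻ y, ENNReal.ofReal (W1 (μ y) (PZ.map (Gf ε y))) ∂PY ≤ ENNReal.ofReal ε) :
    ∀ y : EuclideanSpace ℝ (Fin n), 0 < pY y →
      Tendsto (fun ε => W1 (μ y) (PZ.map (Gf ε y))) (𝓝[>] (0 : ℝ)) (𝓝 0) := by
  intro y₀ hy₀
  have hpcont : ContinuousAt pY y₀ := (hderivY y₀).continuousAt
  set c := pY y₀ / 2 with hc
  have hcpos : 0 < c := by positivity
  -- continuity: pY > c on a ball around y₀
  obtain ⟨δ', hδ'pos, hδ'⟩ : ∃ δ' > 0, ∀ y, dist y y₀ < δ' → c < pY y := by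
    have hmem : {y | c < pY y} ∈ 𝓝 y₀ := hpcont (Ioi_mem_nhds (by simp [hc]; linarith))
    obtain ⟨δ', hδ'pos, hsub⟩ := Metric.mem_nhds_iff.mp hmem
    exact ⟨δ', hδ'pos, fun y hy => hsub (Metric.mem_ball.mpr hy)⟩
  set R := ‖y₀‖ + δ' with hR
  have hRpos : 0 < R := by have := norm_nonneg y₀; linarith
  obtain ⟨C, hC⟩ := hμlip R hRpos
  set M := max C 0 + max L 0 + 1 with hM
  have hMpos : 0 < M := by positivity
  -- key local lower-Lipschitz bound from the two triangle inequalities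
  have key : ∀ ε > (0:ℝ), ∀ y : EuclideanSpace ℝ (Fin n), dist y y₀ < δ' →
      W1 (μ y₀) (PZ.map (Gf ε y₀)) ≤ W1 (μ y) (PZ.map (Gf ε y)) + M * dist y y₀ := by
    intro ε hε y hy
    haveI := hμprob y₀; haveI := hμprob y
    haveI : IsProbabilityMeasure (PZ.map (Gf ε y)) :=
      Measure.isProbabilityMeasure_map (hGmeas ε hε y).aemeasurable
    haveI : IsProbabilityMeasure (PZ.map (Gf ε y₀)) :=
      Measure.isProbabilityMeasure_map (hGmeas ε hε y₀).aemeasurable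
    have t1 : W1 (μ y₀) (PZ.map (Gf ε y₀))
        ≤ W1 (μ y₀) (μ y) + W1 (μ y) (PZ.map (Gf ε y₀)) :=
      StmtNineAux2.W1_triangle _ _ _ (hμmom y₀) (hμmom y) (hGmom ε hε y₀)
    have t2 : W1 (μ y) (PZ.map (Gf ε y₀))
        ≤ W1 (μ y) (PZ.map (Gf ε y)) + W1 (PZ.map (Gf ε y)) (PZ.map (Gf ε y₀)) :=
      StmtNineAux2.W1_triangle _ _ _ (hμmom y) (hGmom ε hε y) (hGmom ε hε y₀)
    have hynorm : ‖y‖ ≤ R := by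
      have h1 : ‖y‖ - ‖y₀‖ ≤ ‖y - y₀‖ := norm_sub_norm_le y y₀
      have h2 : ‖y - y₀‖ < δ' := by rwa [← dist_eq_norm]
      rw [hR]; linarith
    have hy₀norm : ‖y₀‖ ≤ R := by rw [hR]; linarith
    have b1 : W1 (μ y₀) (μ y) ≤ C * ‖y₀ - y‖ := hC y₀ y hy₀norm hynorm
    have b2 : W1 (PZ.map (Gf ε y)) (PZ.map (Gf ε y₀)) ≤ L * ‖y - y₀‖ := hGlip ε hε y y₀
    have hd : ‖y - y₀‖ = dist y y₀ := (dist_eq_norm y y₀).symm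
    have hd' : ‖y₀ - y‖ = dist y y₀ := by rw [norm_sub_rev]; exact hd
    have hdn : (0:ℝ) ≤ dist y y₀ := dist_nonneg
    have hb1 : C * ‖y₀ - y‖ ≤ max C 0 * dist y y₀ := by
      rw [hd']; exact mul_le_mul_of_nonneg_right (le_max_left _ _) hdn
    have hb2 : L * ‖y - y₀‖ ≤ max L 0 * dist y y₀ := by
      rw [hd]; exact mul_le_mul_of_nonneg_right (le_max_left _ _) hdn
    have hsum : max C 0 * dist y y₀ + max L 0 * dist y y₀ ≤ M * dist y y₀ := by
      have : (max C 0 + max L 0) * dist y y₀ ≤ M * dist y y₀ :=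
        mul_le_mul_of_nonneg_right (by rw [hM]; linarith) hdn
      linarith [this]
    linarith
  -- main quantitative estimate
  have main : ∀ δ > (0:ℝ), ∃ η > (0:ℝ), ∀ ε, 0 < ε → ε < η →
      W1 (μ y₀) (PZ.map (Gf ε y₀)) < δ := by
    intro δ hδ
    set r := min δ' (δ / (2 * M)) with hr
    have hrpos : 0 < r := lt_min hδ'pos (by positivity)
    set η' : ENNReal := ENNReal.ofReal (δ / 2) * (ENNReal.ofReal c * volume (Metric.ball y₀ r))
      with hη'
    have hballpos : 0 < volume (Metric.ball y₀ r) := Metric.measure_ball_pos _ _ hrpos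
    have hballtop : volume (Metric.ball y₀ r) ≠ ⊤ := measure_ball_lt_top.ne
    have hη'pos : 0 < η' := by
      rw [hη']
      refine ENNReal.mul_pos ?_ (ENNReal.mul_pos ?_ hballpos.ne').ne'
      · simp [ENNReal.ofReal_pos]; linarith
      · simp [ENNReal.ofReal_pos]; linarith
    have hη'top : η' ≠ ⊤ := by
      rw [hη']
      exact ENNReal.mul_ne_top ENNReal.ofReal_ne_top
        (ENNReal.mul_ne_top ENNReal.ofReal_ne_top hballtop)
    refine ⟨η'.toReal, ENNReal.toReal_pos hη'pos.ne' hη'top, fun ε hε hεη => ?_⟩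
    by_contra hcon
    push_neg at hcon
    have hlow : ∀ y ∈ Metric.ball y₀ r, δ / 2 ≤ W1 (μ y) (PZ.map (Gf ε y)) := by
      intro y hy
      have hyd : dist y y₀ < r := Metric.mem_ball.mp hy
      have h1 := key ε hε y (lt_of_lt_of_le hyd (min_le_left _ _))
      have h2 : M * dist y y₀ ≤ δ / 2 := by
        have hle : dist y y₀ ≤ δ / (2 * M) := le_of_lt (lt_of_lt_of_le hyd (min_le_right _ _))
        have := mul_le_mul_of_nonneg_left hle hMpos.le
        have heq : M * (δ / (2 * M)) = δ / 2 := by field_simp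
        linarith [heq ▸ this]
      have h3 : δ ≤ W1 (μ y) (PZ.map (Gf ε y)) + M * dist y y₀ := le_trans hcon h1
      have h4 : δ ≤ W1 (μ y) (PZ.map (Gf ε y)) + δ / 2 :=
        h3.trans (add_le_add_right h2 _)
      linarith [h4]
    have hball : MeasurableSet (Metric.ball y₀ r) := measurableSet_ball
    have hPYball : ENNReal.ofReal c * volume (Metric.ball y₀ r) ≤ PY (Metric.ball y₀ r) := by
      rw [hPY, withDensity_apply _ hball]
      calc ENNReal.ofReal c * volume (Metric.ball y₀ r)
          = ∫⁻ _ in Metric.ball y₀ r, ENNReal.ofReal c ∂volume := by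
            rw [setLIntegral_const]
        _ ≤ ∫⁻ y in Metric.ball y₀ r, ENNReal.ofReal (pY y) ∂volume := by
            refine setLIntegral_mono' hball fun y hy => ?_
            refine ENNReal.ofReal_le_ofReal (le_of_lt (hδ' y ?_))
            exact lt_of_lt_of_le (Metric.mem_ball.mp hy) (min_le_left _ _)
    have hint2 : η' ≤ ENNReal.ofReal ε := by
      calc η' ≤ ENNReal.ofReal (δ / 2) * PY (Metric.ball y₀ r) := by
            rw [hη']; exact mul_le_mul_right hPYball _
        _ = ∫⁻ _ in Metric.ball y₀ r, ENNReal.ofReal (δ / 2) ∂PY := by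
            rw [setLIntegral_const]
        _ ≤ ∫⁻ y in Metric.ball y₀ r, ENNReal.ofReal (W1 (μ y) (PZ.map (Gf ε y))) ∂PY :=
            setLIntegral_mono' hball fun y hy => ENNReal.ofReal_le_ofReal (hlow y hy)
        _ ≤ ∫⁻ y, ENNReal.ofReal (W1 (μ y) (PZ.map (Gf ε y))) ∂PY :=
            setLIntegral_le_lintegral _ _
        _ ≤ ENNReal.ofReal ε := hint ε hε
    have hfin : η'.toReal ≤ ε := by
      have h := ENNReal.toReal_mono ENNReal.ofReal_ne_top hint2
      rwa [ENNReal.toReal_ofReal hε.le] at h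
    linarith
  rw [Metric.tendsto_nhdsWithin_nhds]
  intro δ hδ
  obtain ⟨η, hηpos, h⟩ := main δ hδ
  refine ⟨η, hηpos, fun {ε} hε hd => ?_⟩
  have hε' : 0 < ε := hε
  rw [Real.dist_eq, sub_zero, abs_of_pos hε'] at hd
  rw [Real.dist_eq, sub_zero, abs_of_nonneg (StmtNineAux2.W1_nonneg _ _)]
  exact h ε hε' hd
end
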